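/- For every k ≥ 1, the function Λ_k can be written as a finite integer linear combination of functions of the form (log^{j_1}·Λ) ⋆ (log^{j_2}·Λ) ⋆ ⋯ ⋆ (log^{j_R}·Λ), where 1 ≤ R ≤ k and j_1, …, j_R are nonnegative integers; more precisely, there is a finite family of tuples (c, R, j_1,…,j_R) with integer coefficients c such that Λ_k(n) = ∑ c · ((log^{j_1}Λ) ⋆ ⋯ ⋆ (log^{j_R}Λ))(n) for all n. -/

import Mathlib

open ArithmeticFunction Finset

/-- The generalized von Mangoldt function `Λ_k := μ ⋆ log^k`, where `log^k`
is the pointwise `k`-th power of the logarithm. -/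
noncomputable def genVonMangoldt (k : ℕ) : ArithmeticFunction ℝ :=
  (↑(ArithmeticFunction.moebius) : ArithmeticFunction ℝ) *
    (ArithmeticFunction.ppow ArithmeticFunction.log k)

/-- `(log^j·Λ)(n) = (log n)^j Λ(n)` (pointwise multiplication). -/
noncomputable def logPowVonMangoldt (j : ℕ) : ArithmeticFunction ℝ :=
  ⟨fun n => (Real.log n) ^ j * ArithmeticFunction.vonMangoldt n, by simp⟩

namespace GenVMAux

open scoped ArithmeticFunction.zeta ArithmeticFunction.Moebius

lemma logPow_apply (j n : ℕ) :
    logPowVonMangoldt j n = (Real.log n) ^ j * ArithmeticFunction.vonMangoldt n := rfl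

lemma logPow_zero : logPowVonMangoldt 0 = ArithmeticFunction.vonMangoldt := by
  ext n; simp [logPow_apply]

lemma log_pmul_add (f g : ArithmeticFunction ℝ) :
    log.pmul (f + g) = log.pmul f + log.pmul g := by
  ext n; simp [pmul_apply, mul_add]

lemma log_pmul_zero : log.pmul (0 : ArithmeticFunction ℝ) = 0 := by
  ext n; simp [pmul_apply]

lemma log_pmul_one : log.pmul (1 : ArithmeticFunction ℝ) = 0 := by
  ext n
  simp only [pmul_apply, one_apply, ArithmeticFunction.zero_apply, log_apply]
  split_ifs with h
  · simp [h]
  · simp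

lemma log_pmul_mul (f g : ArithmeticFunction ℝ) :
    log.pmul (f * g) = (log.pmul f) * g + f * (log.pmul g) := by
  ext n
  simp only [pmul_apply, mul_apply, ArithmeticFunction.add_apply, log_apply]
  rw [Finset.mul_sum, ← Finset.sum_add_distrib]
  refine Finset.sum_congr rfl fun p hp => ?_
  obtain ⟨h, hn⟩ := Nat.mem_divisorsAntidiagonal.mp hp
  have h1 : p.1 ≠ 0 := fun h0 => hn (by rw [← h, h0, zero_mul])
  have h2 : p.2 ≠ 0 := fun h0 => hn (by rw [← h, h0, mul_zero])
  have hlog : Real.log n = Real.log p.1 + Real.log p.2 := by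
    rw [← h, Nat.cast_mul,
      Real.log_mul (Nat.cast_ne_zero.mpr h1) (Nat.cast_ne_zero.mpr h2)]
  rw [hlog]; ring

lemma log_pmul_zeta : log.pmul (ζ : ArithmeticFunction ℝ) = log := by
  ext n
  simp only [pmul_apply, natCoe_apply, zeta_apply, log_apply]
  split_ifs with h
  · simp [h]
  · simp

lemma log_pmul_moebius :
    log.pmul (μ : ArithmeticFunction ℝ) =
      -(ArithmeticFunction.vonMangoldt * (μ : ArithmeticFunction ℝ)) := by
  have h0 : log.pmul ((μ : ArithmeticFunction ℝ) * ζ) = 0 := by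
    rw [coe_moebius_mul_coe_zeta, log_pmul_one]
  rw [log_pmul_mul, log_pmul_zeta] at h0
  have h1 : (log.pmul (μ : ArithmeticFunction ℝ)) * ζ =
      -((μ : ArithmeticFunction ℝ) * log) := by linear_combination h0
  have h2 := congrArg (· * (μ : ArithmeticFunction ℝ)) h1
  simp only [mul_assoc, coe_zeta_mul_coe_moebius, mul_one] at h2
  rw [h2, moebius_mul_log_eq_vonMangoldt]; ring

lemma gen_one : genVonMangoldt 1 = logPowVonMangoldt 0 := by
  rw [logPow_zero, genVonMangoldt, ppow_succ', ppow_zero, pmul_zeta,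
    moebius_mul_log_eq_vonMangoldt]

lemma gen_succ (k : ℕ) :
    genVonMangoldt (k + 1) =
      log.pmul (genVonMangoldt k) +
        ArithmeticFunction.vonMangoldt * genVonMangoldt k := by
  have h := log_pmul_mul (μ : ArithmeticFunction ℝ) (log.ppow k)
  rw [log_pmul_moebius] at h
  unfold genVonMangoldt
  rw [ppow_succ']
  have hμ : (μ : ArithmeticFunction ℝ) * log.pmul (log.ppow k) =
      log.pmul ((μ : ArithmeticFunction ℝ) * log.ppow k) +
        ArithmeticFunction.vonMangoldt * ((μ : ArithmeticFunction ℝ) * log.ppow k) := by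
    linear_combination -h
  rw [hμ]


noncomputable def P (l : List ℕ) : ArithmeticFunction ℝ :=
  (l.map logPowVonMangoldt).prod

def derivList : List ℕ → List (List ℕ)
  | [] => []
  | a :: l => ((a + 1) :: l) :: (derivList l).map (a :: ·)

lemma length_mem_derivList : ∀ l m : List ℕ, m ∈ derivList l → m.length = l.length
  | [], m, hm => by simp [derivList] at hm
  | a :: l, m, hm => by
    rcases List.mem_cons.mp hm with h | h
    · simp [h]
    · obtain ⟨m', hm', rfl⟩ := List.mem_map.mp h
      simp [length_mem_derivList l m' hm']

lemma P_nil : P [] = 1 := by simp [P]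

lemma P_cons (a : ℕ) (l : List ℕ) : P (a :: l) = logPowVonMangoldt a * P l := by
  simp [P]

lemma log_pmul_logPow (a : ℕ) :
    log.pmul (logPowVonMangoldt a) = logPowVonMangoldt (a + 1) := by
  ext n
  simp only [pmul_apply, log_apply, logPow_apply]
  ring

lemma mul_listSum (f : ArithmeticFunction ℝ) :
    ∀ L : List (ArithmeticFunction ℝ), f * L.sum = (L.map (f * ·)).sum
  | [] => by simp
  | g :: L => by simp [mul_add, mul_listSum f L]

lemma log_pmul_P (l : List ℕ) :
    log.pmul (P l) = ((derivList l).map P).sum := by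
  induction l with
  | nil => simp [P_nil, derivList, log_pmul_one]
  | cons a l ih =>
    rw [P_cons, log_pmul_mul, log_pmul_logPow, ih, derivList]
    simp only [List.map_cons, List.sum_cons, List.map_map, ← P_cons]
    congr 1
    rw [mul_listSum, List.map_map]
    congr 1

lemma log_pmul_sum (L : List (List ℕ)) :
    log.pmul ((L.map P).sum) = ((L.flatMap derivList).map P).sum := by
  induction L with
  | nil => simp [log_pmul_zero]
  | cons l L ih =>
    rw [List.map_cons, List.sum_cons, log_pmul_add, ih, log_pmul_P,
      List.flatMap_cons, List.map_append, List.sum_append]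

lemma vonMangoldt_mul_sum (L : List (List ℕ)) :
    ArithmeticFunction.vonMangoldt * (L.map P).sum =
      ((L.map (0 :: ·)).map P).sum := by
  induction L with
  | nil => simp
  | cons l L ih =>
    simp only [List.map_cons, List.sum_cons, mul_add, ih, P_cons, logPow_zero]

lemma rep : ∀ k : ℕ, 1 ≤ k → ∃ L : List (List ℕ),
    (∀ l ∈ L, 1 ≤ l.length ∧ l.length ≤ k) ∧
    genVonMangoldt k = (L.map P).sum := by
  intro k hk
  induction k with
  | zero => omega
  | succ k ih =>
    rcases Nat.eq_or_lt_of_le hk with h1 | h1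
    · refine ⟨[[0]], by simp, ?_⟩
      rw [← h1, gen_one]
      simp [P]
    · obtain ⟨L, hL, hrep⟩ := ih (by omega)
      refine ⟨L.flatMap derivList ++ L.map (0 :: ·), ?_, ?_⟩
      · intro l hl
        rcases List.mem_append.mp hl with h | h
        · obtain ⟨l', hl', hm⟩ := List.mem_flatMap.mp h
          have := length_mem_derivList l' l hm
          have := hL l' hl'
          omega
        · obtain ⟨l', hl', rfl⟩ := List.mem_map.mp h
          have := hL l' hl'
          simp; omega
      · rw [gen_succ, hrep, log_pmul_sum, vonMangoldt_mul_sum,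
          List.map_append, List.sum_append]


lemma P_eq (l : List ℕ) :
    P l = ∏ r : Fin l.length, logPowVonMangoldt (l.get r) := by
  conv_lhs => rw [P, ← List.ofFn_get l, List.map_ofFn]
  rw [List.prod_ofFn]
  rfl

lemma listSum_apply :
    ∀ (M : List (ArithmeticFunction ℝ)) (n : ℕ),
      M.sum n = (M.map (fun f => f n)).sum
  | [], _ => by simp
  | f :: M, n => by simp [listSum_apply M n]

lemma sum_map_eq (g : List ℕ → ℝ) (L : List (List ℕ)) :
    (L.map g).sum = ∑ t : Fin L.length, g (L.get t) := by
  conv_lhs => rw [← List.ofFn_get L, List.map_ofFn]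
  rw [List.sum_ofFn]
  rfl

end GenVMAux

/-- For every `k ≥ 1`, `Λ_k` is a finite integer linear combination of
Dirichlet convolutions `(log^{j_1}Λ) ⋆ ⋯ ⋆ (log^{j_R}Λ)` with `1 ≤ R ≤ k`
and nonnegative integers `j_1, …, j_R`. -/
theorem genVonMangoldt_linear_combination (k : ℕ) (hk : 1 ≤ k) :
    ∃ (I : ℕ) (c : Fin I → ℤ) (R : Fin I → ℕ)
      (j : (t : Fin I) → Fin (R t) → ℕ),
      (∀ t : Fin I, 1 ≤ R t ∧ R t ≤ k) ∧
      ∀ n : ℕ,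
        genVonMangoldt k n =
          ∑ t : Fin I,
            (c t : ℝ) * (∏ r : Fin (R t), logPowVonMangoldt (j t r)) n := by
  obtain ⟨L, hL, hrep⟩ := GenVMAux.rep k hk
  refine ⟨L.length, fun _ => 1, fun t => (L.get t).length,
    fun t r => (L.get t).get r, fun t => hL _ (L.get_mem _), fun n => ?_⟩
  rw [hrep, GenVMAux.listSum_apply, List.map_map,
    GenVMAux.sum_map_eq ((fun f : ArithmeticFunction ℝ => f n) ∘ GenVMAux.P) L]
  simp only [Int.cast_one, one_mul]
  exact Finset.sum_congr rfl fun t _ => by rw [Function.comp, GenVMAux.P_eq]
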